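/- Let R be a commutative ring with identity. If there exist two non-comparable nonzero proper ideals I₁ and I₂ of R (i.e., I₁ ⊄ I₂ and I₂ ⊄ I₁) that are adjacent in SII(R), then the girth of SII(R) equals 3. -/

import Mathlib

open Pointwise

/-- An ideal `I` of a commutative ring `R` is a *second ideal* if `I ≠ (0)` and
for every `r : R`, either `r • I = (0)` or `r • I = I`. -/
def IsSecondIdeal {R : Type*} [CommRing R] (I : Ideal R) : Prop :=
  I ≠ ⊥ ∧ ∀ r : R, r • I = ⊥ ∨ r • I = I

/-- The *second ideal intersection graph* `SII R`: vertices are the nonzero proper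
ideals of `R`, and two distinct vertices `I`, `J` are adjacent iff `I ⊓ J` is a
second ideal of `R`. -/
def SII (R : Type*) [CommRing R] : SimpleGraph {I : Ideal R // I ≠ ⊥ ∧ I ≠ ⊤} where
  Adj I J := I ≠ J ∧ IsSecondIdeal (I.1 ⊓ J.1)
  symm := ⟨fun I J h => ⟨h.1.symm, by rw [inf_comm]; exact h.2⟩⟩
  loopless := ⟨fun I h => h.1 rfl⟩

/-- If two non-comparable nonzero proper ideals of `R` are
adjacent in `SII R`, then the girth of `SII R` equals 3. -/
theorem stmt12 (R : Type*) [CommRing R]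
    (h : ∃ I₁ I₂ : {I : Ideal R // I ≠ ⊥ ∧ I ≠ ⊤},
      ¬ I₁.1 ≤ I₂.1 ∧ ¬ I₂.1 ≤ I₁.1 ∧ (SII R).Adj I₁ I₂) :
    (SII R).girth = 3 := by
  obtain ⟨a, b, hab, hba, hadj⟩ := h
  obtain ⟨hne, hsec⟩ := hadj
  have hKbot : a.1 ⊓ b.1 ≠ ⊥ := hsec.1
  have hKtop : a.1 ⊓ b.1 ≠ ⊤ := by
    intro hK
    have h1 : a.1 ⊓ b.1 ≤ a.1 := inf_le_left
    rw [hK] at h1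
    exact a.2.2 (top_le_iff.mp h1)
  set c : {I : Ideal R // I ≠ ⊥ ∧ I ≠ ⊤} := ⟨a.1 ⊓ b.1, hKbot, hKtop⟩ with hc
  have hca : c ≠ a := fun hh => hab (by rw [← congrArg Subtype.val hh]; exact inf_le_right)
  have hcb : c ≠ b := fun hh => hba (by rw [← congrArg Subtype.val hh]; exact inf_le_left)
  have hKa : c.1 ⊓ a.1 = a.1 ⊓ b.1 := inf_of_le_left inf_le_left
  have hKb : c.1 ⊓ b.1 = a.1 ⊓ b.1 := inf_of_le_left inf_le_right
  have adj_bc : (SII R).Adj b c := ⟨fun hh => hcb hh.symm, by rw [inf_comm, hKb]; exact hsec⟩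
  have adj_ca : (SII R).Adj c a := ⟨hca, by rw [hKa]; exact hsec⟩
  have adj_ab : (SII R).Adj a b := ⟨hne, hsec⟩
  let w : (SII R).Walk a a :=
    SimpleGraph.Walk.cons adj_ab (SimpleGraph.Walk.cons adj_bc
      (SimpleGraph.Walk.cons adj_ca SimpleGraph.Walk.nil))
  have hcyc : w.IsCycle := by
    rw [SimpleGraph.Walk.cons_isCycle_iff]
    constructor
    · simp only [SimpleGraph.Walk.cons_isPath_iff, SimpleGraph.Walk.isPath_iff_eq_nil,
        SimpleGraph.Walk.support_cons, SimpleGraph.Walk.support_nil, List.mem_cons,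
        List.mem_singleton, List.not_mem_nil, or_false, not_or]
      refine ⟨⟨trivial, ?_⟩, ⟨fun hh => hcb hh.symm, fun hh => hne hh.symm⟩⟩
      exact hca
    · intro hmem
      simp only [SimpleGraph.Walk.edges_cons, SimpleGraph.Walk.edges_nil,
        List.mem_cons, List.not_mem_nil, or_false] at hmem
      rcases hmem with hm | hm <;> rw [Sym2.eq_iff] at hm <;>
        rcases hm with ⟨h1, h2⟩ | ⟨h1, h2⟩
      · exact hne h1
      · exact hca h1.symm
      · exact hca h1.symm
      · exact hcb h2.symm
  have hle : (SII R).egirth ≤ 3 := by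
    refine le_trans (iInf_le_of_le a (iInf_le_of_le w (iInf_le_of_le hcyc le_rfl))) ?_
    simp [w]
  have hge : (3 : ℕ∞) ≤ (SII R).egirth := SimpleGraph.three_le_egirth
  have : (SII R).egirth = 3 := le_antisymm hle hge
  simp [SimpleGraph.girth, this]
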